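/- Fix integers r ≥ 1 and d ≥ 1, and let F_{d,h} : [0,1] → [0,1] be defined by F_{d,0}(x) = x and F_{d,h}(x) = 1 − ∫_x^1 (1 − (1 − F_{d,h−1}(t))^r)^d dt for h ≥ 1. Then for every x ∈ [0,1] and every integer h ≥ 0, (−1)^h·F_{d,h}(x) ≤ (−1)^h·F_{d,h+1}(x) and (−1)^h·F_{d,h}(x) ≤ (−1)^h·F_{d,h+2}(x). -/

import Mathlib

/-- The functions `F_{d,h}` defined by `F_{d,0}(x) = x` and
`F_{d,h}(x) = 1 - ∫_x^1 (1-(1-F_{d,h-1}(t))^r)^d dt`. -/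
noncomputable def Fseq (r d : ℕ) : ℕ → ℝ → ℝ
  | 0 => fun x => x
  | h + 1 => fun x => 1 - ∫ t in x..(1 : ℝ), (1 - (1 - Fseq r d h t) ^ r) ^ d

namespace FseqAux

noncomputable def g (r d : ℕ) (y : ℝ) : ℝ := (1 - (1 - y) ^ r) ^ d

lemma Fseq_succ (r d h : ℕ) (x : ℝ) :
    Fseq r d (h + 1) x = 1 - ∫ t in x..(1 : ℝ), g r d (Fseq r d h t) := rfl

lemma g_mem (r d : ℕ) {y : ℝ} (hy : y ∈ Set.Icc (0 : ℝ) 1) :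
    g r d y ∈ Set.Icc (0 : ℝ) 1 := by
  obtain ⟨h0, h1⟩ := hy
  have hp0 : (0 : ℝ) ≤ (1 - y) ^ r := pow_nonneg (by linarith) r
  have hp1 : (1 - y) ^ r ≤ 1 := pow_le_one₀ (by linarith) (by linarith)
  exact ⟨pow_nonneg (by linarith) d, pow_le_one₀ (by linarith) (by linarith)⟩

lemma g_mono (r d : ℕ) {y z : ℝ} (hy : y ∈ Set.Icc (0 : ℝ) 1)
    (hz : z ∈ Set.Icc (0 : ℝ) 1) (hyz : y ≤ z) : g r d y ≤ g r d z := by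
  obtain ⟨hy0, hy1⟩ := hy
  obtain ⟨hz0, hz1⟩ := hz
  have h1 : (1 - z) ^ r ≤ (1 - y) ^ r :=
    pow_le_pow_left₀ (by linarith) (by linarith) r
  have h2 : (1 - y) ^ r ≤ 1 := pow_le_one₀ (by linarith) (by linarith)
  exact pow_le_pow_left₀ (by linarith) (by linarith) d

lemma g_cont (r d : ℕ) : Continuous (g r d) := by
  unfold g; fun_prop

lemma F_cont (r d : ℕ) : ∀ h, Continuous (Fseq r d h) := by
  intro h
  induction h with
  | zero => exact continuous_id
  | succ n ih =>
    have hc : Continuous fun t => g r d (Fseq r d n t) := (g_cont r d).comp ih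
    have h1 : Continuous fun x : ℝ => ∫ t in (1 : ℝ)..x, g r d (Fseq r d n t) :=
      intervalIntegral.continuous_primitive (fun a b => hc.intervalIntegrable a b) 1
    have h2 : Continuous fun x : ℝ => ∫ t in x..(1 : ℝ), g r d (Fseq r d n t) := by
      have heq : (fun x : ℝ => ∫ t in x..(1 : ℝ), g r d (Fseq r d n t))
          = fun x : ℝ => -∫ t in (1 : ℝ)..x, g r d (Fseq r d n t) := by
        funext x; rw [intervalIntegral.integral_symm]
      rw [heq]; exact h1.neg
    show Continuous fun x : ℝ => 1 - ∫ t in x..(1 : ℝ), g r d (Fseq r d n t)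
    exact continuous_const.sub h2

lemma F_intble (r d h : ℕ) (x : ℝ) :
    IntervalIntegrable (fun t => g r d (Fseq r d h t)) MeasureTheory.volume x 1 :=
  ((g_cont r d).comp (F_cont r d h)).intervalIntegrable x 1

lemma F_mem (r d : ℕ) : ∀ h, ∀ x ∈ Set.Icc (0 : ℝ) 1, Fseq r d h x ∈ Set.Icc (0 : ℝ) 1 := by
  intro h
  induction h with
  | zero => intro x hx; exact hx
  | succ n ih =>
    intro x hx
    have h0 : 0 ≤ ∫ t in x..(1 : ℝ), g r d (Fseq r d n t) := by
      apply intervalIntegral.integral_nonneg hx.2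
      intro t ht
      exact (g_mem r d (ih t ⟨le_trans hx.1 ht.1, ht.2⟩)).1
    have h1 : (∫ t in x..(1 : ℝ), g r d (Fseq r d n t)) ≤ ∫ _t in x..(1 : ℝ), (1 : ℝ) := by
      apply intervalIntegral.integral_mono_on hx.2 (F_intble r d n x) intervalIntegrable_const
      intro t ht
      exact (g_mem r d (ih t ⟨le_trans hx.1 ht.1, ht.2⟩)).2
    rw [intervalIntegral.integral_const, smul_eq_mul, mul_one] at h1
    rw [Fseq_succ]
    obtain ⟨hx0, hx1⟩ := hx
    exact ⟨by linarith, by linarith⟩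

lemma le_succ (r d h : ℕ) : ∀ x ∈ Set.Icc (0 : ℝ) 1, x ≤ Fseq r d (h + 1) x := by
  intro x hx
  have h1 : (∫ t in x..(1 : ℝ), g r d (Fseq r d h t)) ≤ ∫ _t in x..(1 : ℝ), (1 : ℝ) := by
    apply intervalIntegral.integral_mono_on hx.2 (F_intble r d h x) intervalIntegrable_const
    intro t ht
    exact (g_mem r d (F_mem r d h t ⟨le_trans hx.1 ht.1, ht.2⟩)).2
  rw [intervalIntegral.integral_const, smul_eq_mul, mul_one] at h1
  rw [Fseq_succ]
  linarith

lemma mono_step (r d : ℕ) {a b : ℕ}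
    (hab : ∀ t ∈ Set.Icc (0 : ℝ) 1, Fseq r d a t ≤ Fseq r d b t) :
    ∀ x ∈ Set.Icc (0 : ℝ) 1, Fseq r d (b + 1) x ≤ Fseq r d (a + 1) x := by
  intro x hx
  have hint : (∫ t in x..(1 : ℝ), g r d (Fseq r d a t))
      ≤ ∫ t in x..(1 : ℝ), g r d (Fseq r d b t) := by
    apply intervalIntegral.integral_mono_on hx.2 (F_intble r d a x) (F_intble r d b x)
    intro t ht
    have htI : t ∈ Set.Icc (0 : ℝ) 1 := ⟨le_trans hx.1 ht.1, ht.2⟩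
    exact g_mono r d (F_mem r d a t htI) (F_mem r d b t htI) (hab t htI)
  rw [Fseq_succ, Fseq_succ]
  linarith

lemma flip (r d : ℕ) {h a b : ℕ}
    (hab : ∀ t ∈ Set.Icc (0 : ℝ) 1,
      (-1 : ℝ) ^ h * Fseq r d a t ≤ (-1 : ℝ) ^ h * Fseq r d b t) :
    ∀ x ∈ Set.Icc (0 : ℝ) 1,
      (-1 : ℝ) ^ (h + 1) * Fseq r d (a + 1) x ≤ (-1 : ℝ) ^ (h + 1) * Fseq r d (b + 1) x := by
  rcases Nat.even_or_odd h with he | ho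
  · have hs : (-1 : ℝ) ^ h = 1 := he.neg_one_pow
    have hs' : (-1 : ℝ) ^ (h + 1) = -1 := by rw [pow_succ, hs]; ring
    intro x hx
    have := mono_step r d (a := a) (b := b)
      (fun t ht => by have := hab t ht; rw [hs] at this; linarith) x hx
    rw [hs']
    linarith
  · have hs : (-1 : ℝ) ^ h = -1 := ho.neg_one_pow
    have hs' : (-1 : ℝ) ^ (h + 1) = 1 := by rw [pow_succ, hs]; ring
    intro x hx
    have := mono_step r d (a := b) (b := a)
      (fun t ht => by have := hab t ht; rw [hs] at this; linarith) x hx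
    rw [hs']
    linarith

lemma key1 (r d : ℕ) : ∀ h, ∀ x ∈ Set.Icc (0 : ℝ) 1,
    (-1 : ℝ) ^ h * Fseq r d h x ≤ (-1 : ℝ) ^ h * Fseq r d (h + 1) x := by
  intro h
  induction h with
  | zero =>
    intro x hx
    simp only [pow_zero, one_mul]; exact le_succ r d 0 x hx
  | succ n ih => exact flip r d ih

lemma key2 (r d : ℕ) : ∀ h, ∀ x ∈ Set.Icc (0 : ℝ) 1,
    (-1 : ℝ) ^ h * Fseq r d h x ≤ (-1 : ℝ) ^ h * Fseq r d (h + 2) x := by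
  intro h
  induction h with
  | zero =>
    intro x hx
    simp only [pow_zero, one_mul]; exact le_succ r d 1 x hx
  | succ n ih =>
    intro x hx
    have := flip r d (a := n) (b := n + 2) ih x hx
    exact this

end FseqAux

theorem Fseq_oscillation (r d : ℕ) (hr : 1 ≤ r) (hd : 1 ≤ d) :
    ∀ x ∈ Set.Icc (0 : ℝ) 1, ∀ h : ℕ,
      (-1 : ℝ) ^ h * Fseq r d h x ≤ (-1 : ℝ) ^ h * Fseq r d (h + 1) x ∧
      (-1 : ℝ) ^ h * Fseq r d h x ≤ (-1 : ℝ) ^ h * Fseq r d (h + 2) x := by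
  intro x hx h
  exact ⟨FseqAux.key1 r d h x hx, FseqAux.key2 r d h x hx⟩
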